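/- Let (X,d) be a metric space with |X| ≥ 3, T : X → X a generalized Kannan type mapping with λ ∈ [0, 2/3), and suppose x* is a fixed point of T which is the limit of an iteration sequence x₀, x₁ = Tx₀, x₂ = Tx₁, … with xₙ ≠ x* for all n ≥ 1. Then x* is the unique fixed point of T. -/
import Mathlib


theorem stmt_7 {X : Type*} [MetricSpace X] (h3 : 3 ≤ Cardinal.mk X) (T : X → X)
    (l : ℝ) (hl0 : 0 ≤ l) (hl : l < 2/3)
    (hGK : ∀ x y z : X, x ≠ y → y ≠ z → x ≠ z →
      dist (T x) (T y) + dist (T y) (T z) + dist (T x) (T z) ≤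
        l * (dist x (T x) + dist y (T y) + dist z (T z)))
    (xs : X) (hfix : T xs = xs)
    (x : ℕ → X) (hiter : ∀ n, x (n + 1) = T (x n))
    (hne : ∀ n, 1 ≤ n → x n ≠ xs)
    (hlim : Filter.Tendsto x Filter.atTop (nhds xs)) :
    ∀ y : X, T y = y → y = xs := by
  intro y hy
  by_contra hyne
  -- x n is never equal to y
  have hxny : ∀ n, x n ≠ y := by
    intro n hxn
    have hconst : ∀ m, n ≤ m → x m = y := by
      intro m hm
      induction m, hm using Nat.le_induction with
      | base => exact hxn
      | succ m hm ih => rw [hiter, ih, hy]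
    have hty : Filter.Tendsto x Filter.atTop (nhds y) := by
      apply Filter.Tendsto.congr' _ tendsto_const_nhds
      filter_upwards [Filter.eventually_ge_atTop n] with m hm
      exact (hconst m hm).symm
    exact hyne (tendsto_nhds_unique hty hlim)
  have key : ∀ n, 1 ≤ n → dist y xs ≤ l * dist (x n) (x (n + 1)) := by
    intro n hn
    have h := hGK (x n) y xs (hxny n) hyne (hne n hn)
    rw [hy, hfix, ← hiter n] at h
    have h1 := dist_nonneg (x := x (n + 1)) (y := y)
    have h2 := dist_nonneg (x := x (n + 1)) (y := xs)
    have h3' := dist_nonneg (x := y) (y := y)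
    have h4 := dist_nonneg (x := xs) (y := xs)
    simp only [dist_self] at h
    linarith
  have hd : Filter.Tendsto (fun n => l * dist (x n) (x (n + 1))) Filter.atTop (nhds 0) := by
    have h1 : Filter.Tendsto (fun n => x (n + 1)) Filter.atTop (nhds xs) :=
      hlim.comp (Filter.tendsto_add_atTop_nat 1)
    have h2 := hlim.dist h1
    rw [dist_self] at h2
    simpa using h2.const_mul l
  have hle : dist y xs ≤ 0 := by
    refine ge_of_tendsto hd ?_
    filter_upwards [Filter.eventually_ge_atTop 1] with n hn
    exact key n hn
  exact hyne (eq_of_dist_eq_zero (le_antisymm hle dist_nonneg))
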